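/- The complete graph K₄ admits a (1+√2, 2)-NZF: an orientation and an assignment φ : E(K₄) → ℝ² satisfying Kirchhoff's law at each vertex with 1 ≤ ‖φ(e)‖ ≤ √2 for all 6 edges. -/

import Mathlib

open scoped BigOperators

noncomputable section

/-- The vector `(x, y)` in the Euclidean plane `ℝ²`. -/
def vec2 (x y : ℝ) : EuclideanSpace ℝ (Fin 2) := (WithLp.equiv 2 (Fin 2 → ℝ)).symm ![x, y]

/-- `f` is a `d`-dimensional nowhere-zero `r`-flow ((r,d)-NZF) on the graph `G`.
We encode an orientation together with a flow as a skew-symmetric function on ordered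
pairs of vertices, supported on adjacent pairs, whose values (on edges) have Euclidean
norm in `[1, r-1]`, and which satisfies Kirchhoff's law at every vertex. -/
def IsNZF {V : Type} [Fintype V] (G : SimpleGraph V) (d : ℕ) (r : ℝ)
    (f : V → V → EuclideanSpace ℝ (Fin d)) : Prop :=
  (∀ u v, f u v = - f v u) ∧
  (∀ u v, ¬ G.Adj u v → f u v = 0) ∧
  (∀ u v, G.Adj u v → 1 ≤ ‖f u v‖ ∧ ‖f u v‖ ≤ r - 1) ∧
  (∀ v, ∑ u, f v u = 0)

/-- `G` admits an `(r,d)`-NZF. -/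
def HasNZF {V : Type} [Fintype V] (G : SimpleGraph V) (d : ℕ) (r : ℝ) : Prop :=
  ∃ f, IsNZF G d r f

/-- A graph is bridgeless if none of its edges is a bridge. -/
def Bridgeless {V : Type} (G : SimpleGraph V) : Prop :=
  ∀ e ∈ G.edgeSet, ¬ G.IsBridge e


lemma vec2_norm (x y : ℝ) : ‖vec2 x y‖ = Real.sqrt (x^2 + y^2) := by
  rw [EuclideanSpace.norm_eq]
  simp [vec2, Fin.sum_univ_two, sq_abs, sq]

lemma vec2_neg (x y : ℝ) : -vec2 x y = vec2 (-x) (-y) := by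
  simp [vec2]
  ext i
  fin_cases i <;> simp

lemma vec2_add (a b c d : ℝ) : vec2 a b + vec2 c d = vec2 (a+c) (b+d) := by
  ext i
  fin_cases i <;> simp [vec2]

lemma vec2_zero : vec2 0 0 = 0 := by
  ext i
  fin_cases i <;> simp [vec2]

/-- The complete graph `K₄` admits a `(1+√2, 2)`-NZF. -/
theorem stmt_8 : HasNZF (SimpleGraph.completeGraph (Fin 4)) 2 (1 + Real.sqrt 2) := by
  refine ⟨fun u v => vec2 (!![0,1,0,-1; -1,0,1,0; 0,-1,0,1; 1,0,-1,0] u v)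
      (!![0,0,1,-1; 0,0,-1,1; -1,1,0,0; 1,-1,0,0] u v), ?_, ?_, ?_, ?_⟩
  · intro u v
    fin_cases u <;> fin_cases v <;>
      simp [vec2_neg, Matrix.vecHead, Matrix.vecTail]
  · intro u v h
    have : u = v := by simpa [SimpleGraph.completeGraph] using h
    subst this
    fin_cases u <;> simp [vec2_zero, Matrix.vecHead, Matrix.vecTail]
  · intro u v h
    have hne : u ≠ v := by simpa [SimpleGraph.completeGraph] using h
    fin_cases u <;> fin_cases v <;> simp_all [Matrix.vecHead, Matrix.vecTail] <;>
      rw [vec2_norm] <;> norm_num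
  · intro v
    fin_cases v <;>
      simp [Fin.sum_univ_four, vec2_add, vec2_zero, Matrix.vecHead, Matrix.vecTail]
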